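/- Under the assumption a_{i,2} ≥ c·a_{i,1} for all i with c > 1, if T is chosen uniformly at random from the interval (maxᵢ a_{i,2}, Σᵢ a_{i,2}], then the probability that there exists a subset S ⊆ {1,…,n} with Σ_{i∈S} a_{i,1} ≤ T ≤ Σ_{i∈S} a_{i,2} (equivalently, that T is achievable as the ISSP optimal value) is at least min(1, 2(1 − 1/c)). -/

import Mathlib

open MeasureTheory

lemma stmt7_aux (n : ℕ) (hn : 2 ≤ n) (b1 b2 : ℕ → ℝ) (c : ℝ) (hc : 1 < c)
    (hpos : ∀ i < n, 0 < b1 i) (hle : ∀ i < n, b1 i ≤ b2 i)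
    (hca : ∀ i < n, c * b1 i ≤ b2 i) (hmax : ∀ i < n, b2 i ≤ b2 0) :
    volume {t : ℝ | t ∈ Set.Ioc (b2 0) (∑ i ∈ Finset.range n, b2 i) ∧
        ∃ S ⊆ Finset.range n, (∑ i ∈ S, b1 i) ≤ t ∧ t ≤ ∑ i ∈ S, b2 i} ≥
      ENNReal.ofReal (min 1 (2 * (1 - 1 / c)) *
        ((∑ i ∈ Finset.range n, b2 i) - b2 0)) := by
  have hc0 : (0:ℝ) < c := lt_trans one_pos hc
  have h1n : 1 < n := hn
  set A : ℕ → ℝ := fun k => ∑ i ∈ Finset.range k, b1 i with hA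
  set B : ℕ → ℝ := fun k => ∑ i ∈ Finset.range k, b2 i with hB
  set M : ℝ := b2 0 with hMdef
  have hBn : (∑ i ∈ Finset.range n, b2 i) = B n := rfl
  rw [hBn]
  set d : ℝ := max 0 ((2 - c) / c) with hd
  have hd0 : 0 ≤ d := le_max_left _ _
  set m : ℝ := min 1 (2 * (1 - 1 / c)) with hm
  have hinv : 1 / c < 1 := by rw [div_lt_one hc0]; exact hc
  have hm0 : 0 ≤ m := by
    apply le_min
    · norm_num
    · nlinarith
  have hmd : m + d = 1 := by
    rcases le_total c 2 with h | h
    · have h1 : (0:ℝ) ≤ (2 - c)/c := by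
        apply div_nonneg _ hc0.le; linarith
      have h2 : 2 * (1 - 1/c) ≤ 1 := by
        have : (1:ℝ) ≤ 2 / c := (le_div_iff₀ hc0).mpr (by linarith)
        have h3 : 2 * (1/c) = 2 / c := by ring
        linarith
      rw [hm, hd, min_eq_right h2, max_eq_right h1]
      field_simp
      ring
    · have h1 : (2 - c)/c ≤ 0 := by
        apply div_nonpos_of_nonpos_of_nonneg _ hc0.le; linarith
      have h2 : (1:ℝ) ≤ 2 * (1 - 1/c) := by
        have : 2 / c ≤ 1 := (div_le_one hc0).mpr h
        have h3 : 2 * (1/c) = 2 / c := by ring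
        linarith
      rw [hm, hd, min_eq_left h2, max_eq_left h1]
      ring
  have hb2pos : ∀ i < n, 0 < b2 i := fun i hi => lt_of_lt_of_le (hpos i hi) (hle i hi)
  have hBmono : ∀ {k l : ℕ}, k ≤ l → l ≤ n → B k ≤ B l := by
    intro k l hkl hln
    apply Finset.sum_le_sum_of_subset_of_nonneg (Finset.range_subset_range.2 hkl)
    intro i hi _
    exact (hb2pos i (lt_of_lt_of_le (Finset.mem_range.1 hi) hln)).le
  have hB1 : B 1 = M := by simp [hB, hMdef]
  have hBM : ∀ k, 1 ≤ k → k ≤ n → M ≤ B k := fun k h1 h2 => hB1 ▸ hBmono h1 h2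
  have hcAB : ∀ k, k ≤ n → c * A k ≤ B k := by
    intro k hk
    rw [hA, hB]
    simp only
    rw [Finset.mul_sum]
    exact Finset.sum_le_sum fun i hi =>
      hca i (lt_of_lt_of_le (Finset.mem_range.1 hi) hk)
  have hBsucc : ∀ k, B (k+1) = B k + b2 k := fun k => Finset.sum_range_succ _ _
  set G : Set ℝ := {t : ℝ | t ∈ Set.Ioc M (B n) ∧
      ∃ S ⊆ Finset.range n, (∑ i ∈ S, b1 i) ≤ t ∧ t ≤ ∑ i ∈ S, b2 i} with hG
  set U : Set ℝ := ⋃ k ∈ Finset.Ico 1 n, Set.Ioc (B k) (max M (A (k+1))) with hU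
  -- covering
  have hcover : Set.Ioc M (B n) ⊆ G ∪ U := by
    intro t ht
    by_cases hGt : t ∈ G
    · exact Or.inl hGt
    right
    set s := (Finset.range n).filter (fun j => B j < t) with hs
    have h1s : 1 ∈ s := Finset.mem_filter.2 ⟨Finset.mem_range.2 h1n, by rw [hB1]; exact ht.1⟩
    have hne : s.Nonempty := ⟨1, h1s⟩
    set k := s.max' hne with hk
    have hks : k ∈ s := s.max'_mem hne
    have hkn : k < n := Finset.mem_range.1 (Finset.mem_filter.1 hks).1
    have hBk : B k < t := (Finset.mem_filter.1 hks).2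
    have hk1 : 1 ≤ k := s.le_max' 1 h1s
    have hBk1 : t ≤ B (k+1) := by
      by_cases h : k + 1 = n
      · rw [h]; exact ht.2
      · by_contra hlt
        push_neg at hlt
        have hmem : k + 1 ∈ s := Finset.mem_filter.2
          ⟨Finset.mem_range.2 (lt_of_le_of_ne (Nat.succ_le_of_lt hkn) h), hlt⟩
        have := s.le_max' _ hmem
        omega
    have htA : t ≤ A (k+1) := by
      by_contra h
      push_neg at h
      exact hGt ⟨ht, Finset.range (k+1), Finset.range_subset_range.2 (Nat.succ_le_of_lt hkn),
        h.le, hBk1⟩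
    have : t ∈ Set.Ioc (B k) (max M (A (k+1))) :=
      ⟨hBk, le_trans htA (le_max_right _ _)⟩
    exact Set.mem_biUnion (Finset.mem_Ico.2 ⟨hk1, hkn⟩) this
  -- measure of U
  have hUle : volume U ≤ ENNReal.ofReal (d * (B n - M)) := by
    calc volume U ≤ ∑ k ∈ Finset.Ico 1 n, volume (Set.Ioc (B k) (max M (A (k+1)))) :=
          measure_biUnion_finset_le _ _
      _ ≤ ∑ k ∈ Finset.Ico 1 n, ENNReal.ofReal (d * b2 k) := by
          apply Finset.sum_le_sum
          intro k hk
          rw [Real.volume_Ioc]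
          apply ENNReal.ofReal_le_ofReal
          obtain ⟨hk1, hkn⟩ := Finset.mem_Ico.1 hk
          have hMle : M ≤ B k := hBM k hk1 hkn.le
          have ha2k : b2 k ≤ M := hmax k hkn
          have hca' : c * A (k+1) ≤ B k + b2 k := by
            rw [← hBsucc]; exact hcAB (k+1) hkn
          have hdk : (2 - c)/c * b2 k ≤ d * b2 k :=
            mul_le_mul_of_nonneg_right (le_max_right _ _) (hb2pos k hkn).le
          have h0dk : 0 ≤ d * b2 k := mul_nonneg hd0 (hb2pos k hkn).le
          rcases max_cases M (A (k+1)) with ⟨he, _⟩ | ⟨he, _⟩ <;> rw [he]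
          · linarith
          · have hkey : A (k+1) - B k ≤ (2-c)/c * b2 k := by
              rw [div_mul_eq_mul_div, le_div_iff₀ hc0]
              nlinarith [mul_nonneg (sub_nonneg.2 hc.le) (sub_nonneg.2 (ha2k.trans hMle))]
            linarith
      _ = ENNReal.ofReal (∑ k ∈ Finset.Ico 1 n, d * b2 k) :=
          (ENNReal.ofReal_sum_of_nonneg fun k hk =>
            mul_nonneg hd0 (hb2pos k (Finset.mem_Ico.1 hk).2).le).symm
      _ = ENNReal.ofReal (d * (B n - M)) := by
          rw [← Finset.mul_sum]
          congr 1
          congr 1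
          rw [Finset.sum_Ico_eq_sub _ (le_of_lt h1n)]
          simp [hB, hMdef]
  have hL0 : (0:ℝ) ≤ B n - M := by
    have := hBM n (le_of_lt h1n) le_rfl
    linarith
  have hUtop : volume U ≠ ⊤ := (lt_of_le_of_lt hUle ENNReal.ofReal_lt_top).ne
  rw [ge_iff_le, ← ENNReal.add_le_add_iff_right hUtop]
  calc ENNReal.ofReal (m * (B n - M)) + volume U
      ≤ ENNReal.ofReal (m * (B n - M)) + ENNReal.ofReal (d * (B n - M)) :=
        add_le_add le_rfl hUle
    _ = ENNReal.ofReal (m * (B n - M) + d * (B n - M)) :=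
        (ENNReal.ofReal_add (mul_nonneg hm0 hL0) (mul_nonneg hd0 hL0)).symm
    _ = ENNReal.ofReal (B n - M) := by
        rw [show m * (B n - M) + d * (B n - M) = (m + d) * (B n - M) by ring, hmd, one_mul]
    _ = volume (Set.Ioc M (B n)) := (Real.volume_Ioc).symm
    _ ≤ volume (G ∪ U) := measure_mono hcover
    _ ≤ volume G + volume U := measure_union_le _ _

/-- If `a_{i,2} ≥ c a_{i,1}` for all `i` with `c > 1`, and `T` is uniform on
`(maxᵢ a_{i,2}, Σᵢ a_{i,2}]`, then the probability that some subset `S` satisfies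
`Σ_{i∈S} a_{i,1} ≤ T ≤ Σ_{i∈S} a_{i,2}` is at least `min 1 (2(1-1/c))`.
(Stated via Lebesgue measure: the set of good targets in the interval has measure
at least `min 1 (2(1-1/c))` times the length of the interval; `a_{0,2} = maxᵢ a_{i,2}`.) -/
theorem stmt7 (n : ℕ) (hn : 2 ≤ n) (a1 a2 : ℕ → ℤ) (c : ℝ) (hc : 1 < c)
    (hpos : ∀ i < n, 0 < a1 i) (hle : ∀ i < n, a1 i ≤ a2 i)
    (hca : ∀ i < n, c * (a1 i : ℝ) ≤ (a2 i : ℝ))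
    (hmax : ∀ i < n, a2 i ≤ a2 0) :
    volume {t : ℝ | t ∈ Set.Ioc ((a2 0 : ℝ)) ((∑ i ∈ Finset.range n, a2 i : ℤ) : ℝ) ∧
        ∃ S ⊆ Finset.range n,
          ((∑ i ∈ S, a1 i : ℤ) : ℝ) ≤ t ∧ t ≤ ((∑ i ∈ S, a2 i : ℤ) : ℝ)} ≥
      ENNReal.ofReal (min 1 (2 * (1 - 1 / c)) *
        (((∑ i ∈ Finset.range n, a2 i : ℤ) : ℝ) - (a2 0 : ℝ))) := by
  have h := stmt7_aux n hn (fun i => (a1 i : ℝ)) (fun i => (a2 i : ℝ)) c hc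
    (fun i hi => by show (0:ℝ) < (a1 i : ℝ); exact_mod_cast hpos i hi)
    (fun i hi => by show (a1 i : ℝ) ≤ (a2 i : ℝ); exact_mod_cast hle i hi)
    (fun i hi => by show c * (a1 i : ℝ) ≤ (a2 i : ℝ); exact hca i hi)
    (fun i hi => by show (a2 i : ℝ) ≤ (a2 0 : ℝ); exact_mod_cast hmax i hi)
  convert h using 3 with t
  · push_cast
    rfl
  · push_cast
    ring
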